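/- arXiv:1201.2338 — 5 statements merged into one kernel-verified Lean document; each statement's English description precedes it below -/
import Mathlib

section
/- Let $G$ be a group and $H \trianglelefteq G$ a finite normal subgroup such that the quotient $G/H$ is the internal direct product $\langle \overline{g_1} \rangle \times \cdots \times \langle \overline{g_r} \rangle \cong \mathbb{Z}^{\oplus r}$ for some $r \ge 1$ and elements $g_i \in G$ (where $\overline{g_i}$ denotes the image of $g_i$ in $G/H$). Then there is an integer $s > 0$ such that the subgroup $G_1 := \langle g_1^s, \dots, g_r^s \rangle$ of $G$ is the internal direct product $\langle g_1^s \rangle \times \cdots \times \langle g_r^s \rangle \cong \mathbb{Z}^{\oplus r}$, $G_1$ has finite index in $G$, and the quotient map $\gamma : G \to G/H$ restricts to an isomorphism from $G_1$ onto a finite-index subgroup of $G/H$. -/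
private theorem ofFn_prod_mul' {M : Type*} [Monoid M] :
    ∀ {n : ℕ} (a b : Fin n → M),
      (∀ i j : Fin n, i ≠ j → Commute (b i) (a j)) →
      (List.ofFn fun i => a i * b i).prod = (List.ofFn a).prod * (List.ofFn b).prod
  | 0, a, b, _ => by simp
  | n + 1, a, b, h => by
    have ih := ofFn_prod_mul' (fun i => a i.succ) (fun i => b i.succ)
      (fun i j hij => h i.succ j.succ (fun e => hij (Fin.succ_injective _ e)))
    have hb0 : Commute (b 0) (List.ofFn fun i : Fin n => a i.succ).prod := by
      apply Commute.list_prod_right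
      intro y hy
      obtain ⟨i, rfl⟩ := List.mem_ofFn.mp hy
      exact h 0 i.succ (Fin.succ_ne_zero i).symm
    rw [List.ofFn_succ (f := fun i => a i * b i), List.ofFn_succ (f := a), List.ofFn_succ (f := b),
      List.prod_cons, List.prod_cons, List.prod_cons, ih]
    rw [mul_assoc (a 0), ← mul_assoc (b 0), hb0.eq, mul_assoc _ (b 0), ← mul_assoc (a 0)]

private theorem ofFn_prod_single' {M : Type*} [Monoid M] :
    ∀ {n : ℕ} (f : Fin n → M) (i : Fin n), (∀ j, j ≠ i → f j = 1) →
      (List.ofFn f).prod = f i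
  | 0, _, i, _ => i.elim0
  | n + 1, f, i, h => by
    rw [List.ofFn_succ, List.prod_cons]
    rcases Fin.eq_zero_or_eq_succ i with rfl | ⟨j, rfl⟩
    · have h1 : (List.ofFn fun k : Fin n => f k.succ).prod = 1 :=
        List.prod_eq_one fun x hx => by
          obtain ⟨k, rfl⟩ := List.mem_ofFn.mp hx
          exact h k.succ (Fin.succ_ne_zero k)
      rw [h1, mul_one]
    · have h0 : f 0 = 1 := h 0 (Fin.succ_ne_zero j).symm
      rw [h0, one_mul]
      exact ofFn_prod_single' _ j fun k hk => h k.succ (by simpa using hk)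

private theorem pow_mul_comm_aux' {G : Type*} [Group G] (a b c : G)
    (hab : a * b = b * a * c) (hca : c * a = a * c) :
    ∀ n : ℕ, a ^ n * b = b * a ^ n * c ^ n
  | 0 => by simp
  | n + 1 => by
    have hcan : Commute c (a ^ n) := (show Commute c a from hca).pow_right n
    calc a ^ (n + 1) * b = a * (a ^ n * b) := by rw [pow_succ']; rw [mul_assoc]
      _ = a * (b * a ^ n * c ^ n) := by rw [pow_mul_comm_aux' a b c hab hca n]
      _ = (a * b) * (a ^ n * c ^ n) := by simp [mul_assoc]
      _ = (b * a * c) * (a ^ n * c ^ n) := by rw [hab]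
      _ = b * a * ((c * a ^ n) * c ^ n) := by simp [mul_assoc]
      _ = b * a * ((a ^ n * c) * c ^ n) := by rw [hcan.eq]
      _ = b * a ^ (n + 1) * c ^ (n + 1) := by
          rw [pow_succ' a, pow_succ' c]; simp [mul_assoc]

/-- Lemma (group-theoretic lemma of the paper). Let `H ⊴ G` be a finite normal
subgroup such that `G ⧸ H = ⟨γ(g₁)⟩ × ⋯ × ⟨γ(g_r)⟩ ≅ ℤ^r` for some `r ≥ 1` and
`gᵢ ∈ G` (expressed by: the quotient is abelian and `v ↦ ∏ γ(gᵢ)^{vᵢ}` is a bijection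
from `ℤ^r` onto `G ⧸ H`). Then there is an integer `s > 0` such that
`G₁ := ⟨g₁^s, …, g_r^s⟩` is the internal direct product
`⟨g₁^s⟩ × ⋯ × ⟨g_r^s⟩ ≅ ℤ^r` (the map `φ : v ↦ ∏ (gᵢ^s)^{vᵢ}` from `ℤ^r` is an
injective homomorphism with image `G₁`), `G₁` has finite index in `G`, and the
quotient map `γ : G → G ⧸ H` restricts to an isomorphism of `G₁` onto a finite-index
subgroup of `G ⧸ H`. -/
theorem exists_pow_free_abelian_finiteIndex {G : Type*} [Group G]
    (H : Subgroup G) [H.Normal] (hH : (H : Set G).Finite)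
    (r : ℕ) (hr : 1 ≤ r) (g : Fin r → G)
    (hab : ∀ a b : G ⧸ H, a * b = b * a)
    (hbasis : Function.Bijective fun v : Fin r → ℤ =>
      (List.ofFn fun i => ((g i : G ⧸ H)) ^ v i).prod) :
    ∃ s : ℕ, 0 < s ∧
      (Function.Injective fun v : Fin r → ℤ =>
        (List.ofFn fun i => (g i ^ s) ^ v i).prod) ∧
      (∀ v w : Fin r → ℤ,
        (List.ofFn fun i => (g i ^ s) ^ (v i + w i)).prod =
          (List.ofFn fun i => (g i ^ s) ^ v i).prod *
            (List.ofFn fun i => (g i ^ s) ^ w i).prod) ∧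
      (Set.range fun v : Fin r → ℤ => (List.ofFn fun i => (g i ^ s) ^ v i).prod) =
        (Subgroup.closure (Set.range fun i => g i ^ s) : Set G) ∧
      (Subgroup.closure (Set.range fun i => g i ^ s)).FiniteIndex ∧
      Set.InjOn (QuotientGroup.mk : G → G ⧸ H)
        (Subgroup.closure (Set.range fun i => g i ^ s) : Set G) ∧
      ((Subgroup.closure (Set.range fun i => g i ^ s)).map
        (QuotientGroup.mk' H)).FiniteIndex := by
  haveI : Finite H := hH.to_subtype
  haveI : Finite (MulAut H) :=
    Finite.of_injective (fun e => (e : H → H)) DFunLike.coe_injective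
  set m : ℕ := Nat.card (MulAut H) with hm
  set n : ℕ := Nat.card H with hn
  have hmpos : 0 < m := Nat.card_pos
  have hnpos : 0 < n := Nat.card_pos
  set s : ℕ := m * n with hs
  have hspos : 0 < s := Nat.mul_pos hmpos hnpos
  -- x ^ m centralizes H
  have hcent : ∀ (x : G), ∀ h ∈ H, x ^ m * h = h * x ^ m := by
    intro x h hh
    have h1 : MulAut.conjNormal (x ^ m) = (1 : MulAut H) := by
      rw [map_pow]; exact pow_card_eq_one'
    have h2 : (MulAut.conjNormal (x ^ m) ⟨h, hh⟩ : G) = h := by rw [h1]; rfl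
    rw [MulAut.conjNormal_apply] at h2
    calc x ^ m * h = (x ^ m * h * (x ^ m)⁻¹) * x ^ m := by group
      _ = h * x ^ m := by rw [h2]
  -- elements of H have order dividing n
  have hHn : ∀ c ∈ H, c ^ n = 1 := by
    intro c hc
    have : ((⟨c, hc⟩ : H) ^ n : H) = 1 := pow_card_eq_one'
    simpa using congrArg (Subtype.val) this
  -- pairwise commutation
  have hcomm : ∀ i j : Fin r, Commute (g i ^ s) (g j ^ s) := by
    intro i j
    set a : G := g i ^ m with ha
    set b : G := g j ^ m with hb2
    set c : G := a⁻¹ * b⁻¹ * a * b with hc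
    have hcH : c ∈ H := by
      rw [← QuotientGroup.eq_one_iff]
      have : ((c : G) : G ⧸ H) = ((a : G) : G ⧸ H)⁻¹ * ((b : G) : G ⧸ H)⁻¹ *
          ((a : G) : G ⧸ H) * ((b : G) : G ⧸ H) := by
        rw [hc]; rfl
      rw [this]
      have hcomm' := hab ((a : G) : G ⧸ H) ((b : G) : G ⧸ H)
      rw [mul_assoc, hcomm']
      group
    have habc : a * b = b * a * c := by rw [hc]; group
    have hca : c * a = a * c := (hcent (g i) c hcH).symm
    have hcn : c ^ n = 1 := hHn c hcH
    have key : a ^ n * b = b * a ^ n := by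
      rw [pow_mul_comm_aux' a b c habc hca n, hcn, mul_one]
    have h1 : Commute (g i ^ s) b := by
      rw [hs, pow_mul, ← ha]; exact key
    have h2 : Commute (g i ^ s) (g j ^ s) := by
      rw [hs, pow_mul (g j), ← hb2]
      exact h1.pow_right n
    exact h2
  set γm := QuotientGroup.mk' H with hγm
  set e : (Fin r → ℤ) → G ⧸ H :=
    fun v => (List.ofFn fun i => ((g i : G ⧸ H)) ^ v i).prod with he
  set φ : (Fin r → ℤ) → G :=
    fun v => (List.ofFn fun i => (g i ^ s) ^ v i).prod with hφ
  -- e is additive-to-multiplicative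
  have e_add : ∀ v w : Fin r → ℤ, e (fun i => v i + w i) = e v * e w := by
    intro v w
    show (List.ofFn fun i => ((g i : G ⧸ H)) ^ (v i + w i)).prod = _
    simp_rw [zpow_add]
    exact ofFn_prod_mul' _ _ (fun i j _ => hab _ _)
  have e_inv : ∀ v : Fin r → ℤ, e (fun i => -v i) = (e v)⁻¹ := by
    intro v
    have h1 : e (fun i => -v i) * e v = 1 := by
      rw [← e_add]
      show (List.ofFn fun i => ((g i : G ⧸ H)) ^ (-v i + v i)).prod = 1
      simp
    exact eq_inv_of_mul_eq_one_left h1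
  -- homomorphism property in G (bullet 2)
  have hhom : ∀ v w : Fin r → ℤ,
      (List.ofFn fun i => (g i ^ s) ^ (v i + w i)).prod = φ v * φ w := by
    intro v w
    simp_rw [zpow_add]
    exact ofFn_prod_mul' _ _ (fun i j _ => (hcomm i j).zpow_zpow _ _)
  -- compatibility with the quotient map
  have γφ : ∀ v : Fin r → ℤ,
      ((φ v : G) : G ⧸ H) = e (fun i => (s : ℤ) * v i) := by
    intro v
    calc ((φ v : G) : G ⧸ H) = γm (φ v) := rfl
      _ = ((List.ofFn fun i => (g i ^ s) ^ v i).map γm).prod := map_list_prod γm _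
      _ = (List.ofFn fun i => γm ((g i ^ s) ^ v i)).prod := by rw [List.map_ofFn]; rfl
      _ = (List.ofFn fun i => ((g i : G ⧸ H)) ^ ((s : ℤ) * v i)).prod := by
          refine congrArg List.prod (congrArg List.ofFn (funext fun i => ?_))
          rw [map_zpow, map_pow, ← zpow_natCast, ← zpow_mul]
          rfl
      _ = e (fun i => (s : ℤ) * v i) := rfl
  -- key injectivity
  have hkey : ∀ v w : Fin r → ℤ,
      ((φ v : G) : G ⧸ H) = ((φ w : G) : G ⧸ H) → v = w := by
    intro v w h
    rw [γφ, γφ] at h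
    have h2 := hbasis.injective h
    funext i
    have h3 := congrFun h2 i
    exact mul_left_cancel₀ (by exact_mod_cast hspos.ne' : (s : ℤ) ≠ 0) h3
  have hinj : Function.Injective φ := by
    intro v w h
    exact hkey v w (congrArg (QuotientGroup.mk : G → G ⧸ H) h)
  -- range φ = closure
  have hsub : ∀ v : Fin r → ℤ,
      φ v ∈ Subgroup.closure (Set.range fun i => g i ^ s) := by
    intro v
    apply Subgroup.list_prod_mem
    intro x hx
    obtain ⟨i, rfl⟩ := List.mem_ofFn.mp hx
    exact Subgroup.zpow_mem _ (Subgroup.subset_closure (Set.mem_range_self i)) _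
  have hgen : ∀ i : Fin r, g i ^ s = φ (fun j => if j = i then (1 : ℤ) else 0) := by
    intro i
    have h1 : (List.ofFn fun j => (g j ^ s) ^ (if j = i then (1 : ℤ) else 0)).prod
        = (g i ^ s) ^ (if i = i then (1 : ℤ) else 0) :=
      ofFn_prod_single' (fun j => (g j ^ s) ^ (if j = i then (1 : ℤ) else 0)) i
        (fun j hj => by
          show (g j ^ s) ^ (if j = i then (1 : ℤ) else 0) = 1
          rw [if_neg hj, zpow_zero])
    show g i ^ s = (List.ofFn fun j => (g j ^ s) ^ (if j = i then (1 : ℤ) else 0)).prod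
    rw [h1, if_pos rfl, zpow_one]
  have hrange : (Set.range φ)
      = (Subgroup.closure (Set.range fun i => g i ^ s) : Set G) := by
    apply Set.Subset.antisymm
    · rintro x ⟨v, rfl⟩
      exact hsub v
    · have hφ0 : φ 0 = 1 := by
        show (List.ofFn fun i => (g i ^ s) ^ ((0 : Fin r → ℤ) i)).prod = 1
        simp
      let S : Subgroup G :=
        { carrier := Set.range φ
          one_mem' := ⟨0, hφ0⟩
          mul_mem' := by
            rintro x y ⟨v, rfl⟩ ⟨w, rfl⟩
            exact ⟨fun i => v i + w i, hhom v w⟩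
          inv_mem' := by
            rintro x ⟨v, rfl⟩
            refine ⟨fun i => -v i, eq_inv_of_mul_eq_one_left ?_⟩
            have h1 : (List.ofFn fun i => (g i ^ s) ^ (-v i + v i)).prod
                = φ (fun i => -v i) * φ v := hhom (fun i => -v i) v
            rw [← h1]
            show (List.ofFn fun i => (g i ^ s) ^ (-v i + v i)).prod = 1
            simp }
      have hle : Subgroup.closure (Set.range fun i => g i ^ s) ≤ S :=
        (Subgroup.closure_le S).mpr (by rintro x ⟨i, rfl⟩; exact ⟨fun j => if j = i then (1 : ℤ) else 0, (hgen i).symm⟩)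
      exact hle
  -- the image subgroup and its finite index
  set G₁ := Subgroup.closure (Set.range fun i => g i ^ s) with hG₁
  set K := G₁.map γm with hK
  have hmemK : ∀ u : Fin r → ℤ, e (fun i => (s : ℤ) * u i) ∈ K :=
    fun u => Subgroup.mem_map.mpr ⟨φ u, hsub u, γφ u⟩
  haveI : NeZero s := ⟨hspos.ne'⟩
  have hFsurj : Function.Surjective
      (fun c : Fin r → ZMod s =>
        ((e (fun i => ((c i).val : ℤ)) : G ⧸ H) : (G ⧸ H) ⧸ K)) := by
    intro q
    obtain ⟨x, rfl⟩ := QuotientGroup.mk_surjective q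
    obtain ⟨v, rfl⟩ := hbasis.surjective x
    refine ⟨fun i => ((v i : ZMod s)), ?_⟩
    set w : Fin r → ℤ := fun i => (((v i : ZMod s)).val : ℤ) with hw
    show (QuotientGroup.mk (e w) : (G ⧸ H) ⧸ K) = QuotientGroup.mk (e v)
    rw [QuotientGroup.eq]
    have hdvd : ∀ i, (s : ℤ) ∣ (-(w i) + v i) := by
      intro i
      rw [← ZMod.intCast_zmod_eq_zero_iff_dvd]
      push_cast [hw]
      simp [ZMod.natCast_val, ZMod.cast_id]
    have h1 : (e w)⁻¹ * e v = e (fun i => -(w i) + v i) := by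
      rw [e_add, e_inv]
    rw [h1]
    have h2 : (fun i => -(w i) + v i)
        = fun i => (s : ℤ) * ((-(w i) + v i) / s) := by
      funext i
      rw [Int.mul_ediv_cancel' (hdvd i)]
    rw [h2]
    exact hmemK _
  haveI : Finite ((G ⧸ H) ⧸ K) := Finite.of_surjective _ hFsurj
  have hKfi : K.FiniteIndex := Subgroup.finiteIndex_of_finite_quotient (H := K)
  -- finite index of G₁ in G
  have hTfi : (K.comap (γm : G →* G ⧸ H)).index ≠ 0 := by
    have heq := Subgroup.index_comap_of_surjective (H := K) (f := γm)
      (QuotientGroup.mk'_surjective H)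
    rw [heq]
    exact hKfi.index_ne_zero
  have hT : K.comap (γm : G →* G ⧸ H) = G₁ ⊔ H := by
    rw [hK, Subgroup.comap_map_eq, hγm, QuotientGroup.ker_mk']
  set T : Subgroup G := G₁ ⊔ H with hTdef
  have hψ : Function.Surjective
      (fun h : H => (QuotientGroup.mk (⟨h.1, (le_sup_right : H ≤ T) h.2⟩ : T)
        : T ⧸ G₁.subgroupOf T)) := by
    intro q
    obtain ⟨t, rfl⟩ := QuotientGroup.mk_surjective q
    have ht : (t : G) ∈ (↑(H ⊔ G₁) : Set G) := by
      rw [sup_comm H G₁, ← hTdef]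
      exact t.2
    rw [Subgroup.normal_mul] at ht
    obtain ⟨h, hh, x, hx, hmul⟩ := ht
    refine ⟨⟨h, hh⟩, ?_⟩
    rw [QuotientGroup.eq]
    rw [Subgroup.mem_subgroupOf]
    show h⁻¹ * (t : G) ∈ G₁
    rw [← hmul, inv_mul_cancel_left]
    exact hx
  haveI : Finite (T ⧸ G₁.subgroupOf T) :=
    Finite.of_surjective _ hψ
  have hrel : G₁.relIndex T ≠ 0 :=
    Subgroup.index_ne_zero_of_finite (H := G₁.subgroupOf T)
  have hG₁fi : G₁.FiniteIndex := by
    constructor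
    rw [← Subgroup.relIndex_mul_index (le_sup_left.trans_eq hTdef.symm : G₁ ≤ T)]
    exact Nat.mul_ne_zero hrel (hT ▸ hTfi)
  -- InjOn
  have hinjOn : Set.InjOn (QuotientGroup.mk : G → G ⧸ H) (G₁ : Set G) := by
    intro x hx y hy hxy
    rw [← hrange] at hx hy
    obtain ⟨v, rfl⟩ := hx
    obtain ⟨w, rfl⟩ := hy
    exact congrArg φ (hkey v w hxy)
  exact ⟨s, hspos, hinj, hhom, hrange, hG₁fi, hinjOn, hKfi⟩
end

section
/- Let $G$ be a group and $g_1, g_2 \in G$. If the set of commutators $\{[g_1^t, g_2] : t \in \mathbb{Z}_{>0}\}$ is finite, then there exists an integer $s > 0$ such that $g_1^s$ commutes with $g_2$. -/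
open scoped commutatorElement

lemma commutator_pow_eq_imp_commute {G : Type*} [Group G] (g₁ g₂ : G) {m n : ℕ}
    (h : m < n) (heq : (⁅g₁ ^ m, g₂⁆ : G) = ⁅g₁ ^ n, g₂⁆) :
    Commute (g₁ ^ (n - m)) g₂ := by
  set d := n - m with hd
  have hn : g₁ ^ n = g₁ ^ d * g₁ ^ m := by rw [← pow_add]; congr 1; omega
  simp only [commutatorElement_def] at heq
  have h1 : g₁ ^ m * g₂ * (g₁ ^ m)⁻¹ = g₁ ^ n * g₂ * (g₁ ^ n)⁻¹ := mul_right_cancel heq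
  set x := g₁ ^ m * g₂ * (g₁ ^ m)⁻¹ with hx
  have h2 : Commute (g₁ ^ d) x := by
    have h5 : g₁ ^ d * (g₁ ^ m * g₂ * (g₁ ^ m)⁻¹) * (g₁ ^ d)⁻¹ = g₁ ^ n * g₂ * (g₁ ^ n)⁻¹ := by
      rw [hn, mul_inv_rev]; group
    have h6 : g₁ ^ d * x * (g₁ ^ d)⁻¹ = x := by rw [hx] at h1 ⊢; rw [h5, ← h1]
    have := congrArg (· * g₁ ^ d) h6
    simp only [inv_mul_cancel_right] at this
    exact this
  have h3 : Commute (g₁ ^ d) (g₁ ^ m) := Commute.pow_pow_self g₁ d m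
  have h4 := (h3.inv_right.mul_right h2).mul_right h3
  have hconj : (g₁ ^ m)⁻¹ * x * g₁ ^ m = g₂ := by
    rw [hx]; group
  rwa [hconj] at h4

/-- If the set of commutators `⁅g₁^t, g₂⁆` for `t > 0` is finite, then some positive
power of `g₁` commutes with `g₂`. -/
theorem finite_commutators_imp_pow_commute {G : Type*} [Group G] (g₁ g₂ : G)
    (hfin : {x : G | ∃ t : ℕ, 0 < t ∧ x = ⁅g₁ ^ t, g₂⁆}.Finite) :
    ∃ s : ℕ, 0 < s ∧ g₁ ^ s * g₂ = g₂ * g₁ ^ s := by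
  set S := {x : G | ∃ t : ℕ, 0 < t ∧ x = ⁅g₁ ^ t, g₂⁆} with hS
  have hmem : ∀ n : ℕ, (⁅g₁ ^ (n + 1), g₂⁆ : G) ∈ S := fun n => ⟨n + 1, Nat.succ_pos n, rfl⟩
  haveI := hfin.to_subtype
  obtain ⟨a, b, hne, heq⟩ := Finite.exists_ne_map_eq_of_infinite
    (fun n : ℕ => (⟨⁅g₁ ^ (n + 1), g₂⁆, hmem n⟩ : S))
  have heq' : (⁅g₁ ^ (a + 1), g₂⁆ : G) = ⁅g₁ ^ (b + 1), g₂⁆ := congrArg Subtype.val heq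
  rcases hne.lt_or_gt with h | h
  · exact ⟨b + 1 - (a + 1), by omega,
      commutator_pow_eq_imp_commute g₁ g₂ (by omega) heq'⟩
  · exact ⟨a + 1 - (b + 1), by omega,
      commutator_pow_eq_imp_commute g₁ g₂ (by omega) heq'.symm⟩
end

section
/- Let $G$ be a group, $H \trianglelefteq G$ a finite normal subgroup, and $g_1, g_2 \in G$ elements whose images in $G/H$ commute. Then there exists an integer $s > 0$ such that $g_1^s g_2 = g_2 g_1^s$. -/
private lemma conj_pow_aux {G : Type*} [Group G] (g₁ g₂ : G) (t s : ℕ)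
    (heq : g₁ ^ t * g₂ * (g₁ ^ t)⁻¹ = g₁ ^ (t + s) * g₂ * (g₁ ^ (t + s))⁻¹) :
    g₁ ^ s * g₂ = g₂ * g₁ ^ s := by
  rw [pow_add] at heq
  rw [mul_inv_rev, ← mul_assoc] at heq
  have e2 := mul_right_cancel heq
  rw [mul_assoc (g₁ ^ t) (g₁ ^ s) g₂, mul_assoc (g₁ ^ t)] at e2
  have e3 := mul_left_cancel e2
  rw [eq_comm, mul_inv_eq_iff_eq_mul] at e3
  exact e3

/-- If `H` is a finite normal subgroup of `G` and the images of `g₁, g₂` in `G ⧸ H`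
commute, then some positive power of `g₁` commutes with `g₂`. -/
theorem pow_commute_of_commute_mod_finite_normal {G : Type*} [Group G]
    (H : Subgroup G) [H.Normal] (hH : (H : Set G).Finite) (g₁ g₂ : G)
    (hcomm : (g₁ : G ⧸ H) * (g₂ : G ⧸ H) = (g₂ : G ⧸ H) * (g₁ : G ⧸ H)) :
    ∃ s : ℕ, 0 < s ∧ g₁ ^ s * g₂ = g₂ * g₁ ^ s := by
  have hc : Commute (g₁ : G ⧸ H) (g₂ : G ⧸ H) := hcomm
  set S : Set G := (fun h => h * g₂) '' (H : Set G) with hS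
  have hSfin : S.Finite := hH.image _
  have key : ∀ t : ℕ, g₁ ^ t * g₂ * (g₁ ^ t)⁻¹ ∈ S := by
    intro t
    refine ⟨g₁ ^ t * g₂ * (g₁ ^ t)⁻¹ * g₂⁻¹, ?_, by group⟩
    show g₁ ^ t * g₂ * (g₁ ^ t)⁻¹ * g₂⁻¹ ∈ H
    rw [← QuotientGroup.eq_one_iff]
    have h := (hc.pow_left t).eq
    simp only [QuotientGroup.mk_mul, QuotientGroup.mk_inv, QuotientGroup.mk_pow]
    rw [h]
    group
  have : ∃ t u : ℕ, t ≠ u ∧ g₁ ^ t * g₂ * (g₁ ^ t)⁻¹ = g₁ ^ u * g₂ * (g₁ ^ u)⁻¹ := by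
    have : Finite S := hSfin
    obtain ⟨t, u, hne, h1⟩ := Finite.exists_ne_map_eq_of_infinite
      (fun t : ℕ => (⟨g₁ ^ t * g₂ * (g₁ ^ t)⁻¹, key t⟩ : S))
    exact ⟨t, u, hne, congrArg Subtype.val h1⟩
  obtain ⟨t, u, hne, heq⟩ := this
  rcases hne.lt_or_gt with hlt | hlt
  · refine ⟨u - t, by omega, conj_pow_aux g₁ g₂ t (u - t) ?_⟩
    rwa [show t + (u - t) = u by omega]
  · refine ⟨t - u, by omega, conj_pow_aux g₁ g₂ u (t - u) ?_⟩
    rw [show u + (t - u) = t by omega]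
    exact heq.symm
end

section
/- Let $G$ be a group and $H \trianglelefteq G$ a finite normal subgroup such that $G/H$ is abelian. Then for any finitely many elements $g_1, \dots, g_r \in G$ there exists an integer $s > 0$ such that the elements $g_1^s, \dots, g_r^s$ pairwise commute. -/
private lemma comm_pow_aux {G : Type*} [Group G] (a b c : G)
    (hc : a * b = c * (b * a)) (h1 : Commute a c) (h2 : Commute b c) (n m : ℕ) :
    a ^ n * b ^ m = c ^ (n * m) * (b ^ m * a ^ n) := by
  have step1 : ∀ n : ℕ, a ^ n * b = c ^ n * (b * a ^ n) := by
    intro n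
    induction n with
    | zero => simp
    | succ k ih =>
      have hac : a * c ^ k = c ^ k * a := (h1.pow_right k).eq
      calc a ^ (k + 1) * b = a * (a ^ k * b) := by rw [pow_succ']; group
        _ = a * (c ^ k * (b * a ^ k)) := by rw [ih]
        _ = c ^ k * (a * b) * a ^ k := by rw [← mul_assoc, ← mul_assoc, hac]; group
        _ = c ^ k * (c * (b * a)) * a ^ k := by rw [hc]
        _ = c ^ (k + 1) * (b * a ^ (k + 1)) := by rw [pow_succ, pow_succ']; group
  induction m with
  | zero => simp
  | succ k ih =>
    have hbc : b ^ k * c ^ n = c ^ n * b ^ k := ((h2.pow_right n).pow_left k).eq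
    calc a ^ n * b ^ (k + 1) = (a ^ n * b ^ k) * b := by rw [pow_succ]; group
      _ = c ^ (n * k) * (b ^ k * (a ^ n * b)) := by rw [ih]; group
      _ = c ^ (n * k) * (b ^ k * (c ^ n * (b * a ^ n))) := by rw [step1]
      _ = c ^ (n * k) * (c ^ n * (b ^ k * (b * a ^ n))) := by
            have h3 : b ^ k * (c ^ n * (b * a ^ n)) = c ^ n * (b ^ k * (b * a ^ n)) := by
              rw [← mul_assoc, hbc]; group
            rw [h3]
      _ = c ^ (n * (k + 1)) * (b ^ (k + 1) * a ^ n) := by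
            rw [Nat.mul_succ, pow_add, pow_succ]; group

/-- If `H` is a finite normal subgroup of `G` with abelian quotient `G ⧸ H`, then for
any finitely many elements `g₁, …, g_r` of `G` there is a single positive integer `s`
such that the powers `g₁^s, …, g_r^s` pairwise commute. -/
theorem pow_pairwise_commute_of_abelian_quotient {G : Type*} [Group G]
    (H : Subgroup G) [H.Normal] (hH : (H : Set G).Finite)
    (hab : ∀ a b : G ⧸ H, a * b = b * a)
    (r : ℕ) (g : Fin r → G) :
    ∃ s : ℕ, 0 < s ∧ ∀ i j : Fin r, g i ^ s * g j ^ s = g j ^ s * g i ^ s := by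
  have : Finite H := hH.to_subtype
  set t := Nat.card (MulAut H) with ht
  have htpos : 0 < t := Nat.card_pos
  -- `g ^ t` centralizes `H` for every `g : G`
  have hcent : ∀ (x : G), ∀ h ∈ H, x ^ t * h = h * x ^ t := by
    intro x h hh
    have h1 : MulAut.conjNormal (H := H) (x ^ t) = 1 := by
      rw [map_pow, ht, pow_card_eq_one']
    have h2 : (MulAut.conjNormal (H := H) (x ^ t) ⟨h, hh⟩ : G) = h := by rw [h1]; rfl
    rw [MulAut.conjNormal_apply] at h2
    calc x ^ t * h = (x ^ t * h * (x ^ t)⁻¹) * x ^ t := by group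
      _ = h * x ^ t := by rw [h2]
  set n := Nat.card H with hn
  have hnpos : 0 < n := Nat.card_pos
  refine ⟨t * n, Nat.mul_pos htpos hnpos, fun i j => ?_⟩
  set a := g i ^ t with ha
  set b := g j ^ t with hb
  set c := a * b * a⁻¹ * b⁻¹ with hcdef
  have hcH : c ∈ H := by
    rw [hcdef, ← QuotientGroup.eq_one_iff]
    simp only [QuotientGroup.mk_mul, QuotientGroup.mk_inv]
    rw [hab (a : G ⧸ H) (b : G ⧸ H)]
    group
  have h1 : Commute a c := hcent (g i) c hcH
  have h2 : Commute b c := hcent (g j) c hcH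
  have hc : a * b = c * (b * a) := by rw [hcdef]; group
  have key := comm_pow_aux a b c hc h1 h2 n n
  have hcn : c ^ n = 1 := by
    have : ((⟨c, hcH⟩ : H) : G) ^ n = ((1 : H) : G) := by
      rw [← SubmonoidClass.coe_pow, hn, pow_card_eq_one']
    simpa using this
  have hcnn : c ^ (n * n) = 1 := by rw [pow_mul, hcn, one_pow]
  rw [hcnn, one_mul] at key
  rw [pow_mul, pow_mul]
  exact key
end

section
/- Let $G$ be a group containing a finite normal subgroup $H \trianglelefteq G$ such that the quotient $G/H$ is free abelian of rank $r \ge 1$ (i.e., $G/H \cong \mathbb{Z}^{\oplus r}$). Then $G$ contains a finite-index subgroup $G_1$ that is free abelian of rank $r$; in other words, every extension of $\mathbb{Z}^{\oplus r}$ by a finite group is virtually $\mathbb{Z}^{\oplus r}$. Moreover, $G_1$ can be chosen so that the quotient map $G \to G/H$ restricts to an isomorphism from $G_1$ onto a finite-index subgroup of $G/H$. -/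
private lemma aux_pow_comm {G : Type*} [Group G] (a b : G) (n : ℕ)
    (h1 : (a * b * a⁻¹ * b⁻¹) ^ n = 1)
    (h2 : Commute a (a * b * a⁻¹ * b⁻¹)) :
    a ^ n * b = b * a ^ n := by
  set c := a * b * a⁻¹ * b⁻¹ with hc
  have key : ∀ k : ℕ, a ^ k * b = c ^ k * b * a ^ k := by
    intro k
    induction k with
    | zero => simp
    | succ k ih =>
      have hac : a * c ^ k = c ^ k * a := (h2.pow_right k).eq
      have hab : a * b = c * (b * a) := by rw [hc]; group
      calc a ^ (k + 1) * b = a * (a ^ k * b) := by rw [pow_succ']; group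
        _ = a * (c ^ k * b * a ^ k) := by rw [ih]
        _ = (a * c ^ k) * b * a ^ k := by group
        _ = c ^ k * (a * b) * a ^ k := by rw [hac]; group
        _ = c ^ k * (c * (b * a)) * a ^ k := by rw [hab]
        _ = c ^ (k + 1) * b * a ^ (k + 1) := by rw [pow_succ, pow_succ']; group
  have := key n
  rw [h1, one_mul] at this
  exact this

/-- Every extension of `ℤ^r` (`r ≥ 1`) by a finite group is virtually `ℤ^r`: if
`H ⊴ G` is finite and `G ⧸ H` is free abelian of rank `r`, then `G` has a
finite-index subgroup `G₁` that is free abelian of rank `r`, and `G₁` can be chosen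
so that the quotient map `G → G ⧸ H` restricts to an isomorphism of `G₁` onto a
finite-index subgroup of `G ⧸ H` (i.e. it is injective on `G₁` and the image of `G₁`
has finite index). -/
theorem exists_free_abelian_finiteIndex_subgroup {G : Type*} [Group G]
    (H : Subgroup G) [H.Normal] (hH : (H : Set G).Finite)
    (r : ℕ) (hr : 1 ≤ r)
    (hfree : Nonempty ((G ⧸ H) ≃* Multiplicative (Fin r → ℤ))) :
    ∃ G₁ : Subgroup G, G₁.FiniteIndex ∧
      Nonempty (G₁ ≃* Multiplicative (Fin r → ℤ)) ∧
      Set.InjOn (QuotientGroup.mk : G → G ⧸ H) (G₁ : Set G) ∧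
      (G₁.map (QuotientGroup.mk' H)).FiniteIndex := by
  classical
  obtain ⟨e⟩ := hfree
  haveI : Finite (↥H) := hH.to_subtype
  set π : G →* G ⧸ H := QuotientGroup.mk' H with hπ
  set ψ : G →* Multiplicative (Fin r → ℤ) := e.toMonoidHom.comp π with hψ
  have hψeq : ∀ g : G, ψ g = e (π g) := fun g => rfl
  have hψsurj : Function.Surjective ψ :=
    e.surjective.comp (QuotientGroup.mk'_surjective H)
  have hψker : ∀ g : G, ψ g = 1 ↔ g ∈ H := by
    intro g
    rw [hψeq, ← map_one e, e.injective.eq_iff]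
    exact QuotientGroup.eq_one_iff g
  -- the centralizer of H as kernel of the conjugation action
  set f : G →* MulAut (↥H) := MulAut.conjNormal with hf
  set C : Subgroup G := f.ker with hC
  haveI : C.FiniteIndex := Subgroup.finiteIndex_ker f
  have hCcomm : ∀ g ∈ C, ∀ h ∈ H, g * h = h * g := by
    intro g hg h hh
    have : f g ⟨h, hh⟩ = ⟨h, hh⟩ := by
      rw [MonoidHom.mem_ker.mp hg]; rfl
    have : g * h * g⁻¹ = h := by
      have := congrArg Subtype.val this
      simpa [hf, MulAut.conjNormal_apply] using this
    calc g * h = (g * h * g⁻¹) * g := by group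
      _ = h * g := by rw [this]
  set m : ℕ := C.index with hm
  have hm0 : m ≠ 0 := Subgroup.FiniteIndex.index_ne_zero
  have hpowC : ∀ g : G, g ^ m ∈ C := fun g => Subgroup.pow_index_mem C g
  set n : ℕ := Nat.card (↥H) with hn
  have hn0 : n ≠ 0 := Nat.card_ne_zero.mpr ⟨⟨1, H.one_mem⟩, inferInstance⟩
  have hpowH : ∀ g ∈ H, g ^ n = 1 := by
    intro g hg
    have : (⟨g, hg⟩ : ↥H) ^ n = 1 := pow_card_eq_one'
    simpa [← Subgroup.coe_pow] using congrArg Subtype.val this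
  set N : ℕ := m * n with hN
  have hN0 : (N : ℤ) ≠ 0 := Int.natCast_ne_zero.mpr (Nat.mul_ne_zero hm0 hn0)
  -- choose lifts of the standard basis
  have hx : ∀ i : Fin r, ∃ x : G, ψ x = Multiplicative.ofAdd (Pi.single i (1 : ℤ)) :=
    fun i => hψsurj _
  choose x hxψ using hx
  set y : Fin r → G := fun i => x i ^ N with hy
  have hyψ : ∀ i, ψ (y i) = Multiplicative.ofAdd (Pi.single i (N : ℤ)) := by
    intro i
    rw [hy]
    simp only [map_pow, hxψ]
    rw [← ofAdd_nsmul]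
    congr 1
    funext j
    by_cases h : j = i <;> simp [h, Pi.single_apply]
  -- the y i commute
  have hycomm : ∀ i j, Commute (y i) (y j) := by
    intro i j
    have hyi : y i = (x i ^ m) ^ n := by rw [hy, ← pow_mul]
    have hyj : y j = (x j ^ m) ^ n := by rw [hy, ← pow_mul]
    set a := x i ^ m with ha
    set b := x j ^ m with hb
    have haC : a ∈ C := hpowC _
    have hbC : b ∈ C := hpowC _
    set c := a * b * a⁻¹ * b⁻¹ with hcdef
    have hcH : c ∈ H := by
      rw [← hψker]
      have : ψ c = ψ a * ψ b * (ψ a)⁻¹ * (ψ b)⁻¹ := by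
        rw [hcdef]; simp [map_mul, map_inv]
      rw [this, mul_comm (ψ a) (ψ b)]
      group
    have hc1 : c ^ n = 1 := hpowH c hcH
    have hac : Commute a c := hCcomm a haC c hcH
    have h1 : a ^ n * b = b * a ^ n := aux_pow_comm a b n hc1 hac
    rw [hyi, hyj]
    exact (show Commute (a ^ n) b from h1).pow_right n
  -- the homomorphism from ℤ^r
  set φ : ∀ _ : Fin r, Multiplicative ℤ →* G := fun i => zpowersHom G (y i) with hφ
  have hcomm : Pairwise fun i j => ∀ u v, Commute (φ i u) (φ j v) := by
    intro i j _
    intro u v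
    exact (hycomm i j).zpow_zpow _ _
  set Φ0 : (∀ _ : Fin r, Multiplicative ℤ) →* G := MonoidHom.noncommPiCoprod φ hcomm with hΦ0
  set Φ : Multiplicative (Fin r → ℤ) →* G :=
    Φ0.comp (MulEquiv.piMultiplicative (fun _ : Fin r => ℤ)).toMonoidHom with hΦ
  have hΦapply : ∀ v : Fin r → ℤ,
      Φ (Multiplicative.ofAdd v) =
        Finset.univ.noncommProd (fun i => y i ^ v i)
          (fun _ _ _ _ h => hcomm h _ _) := by
    intro v
    rfl
  have hψΦ : ∀ v : Fin r → ℤ,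
      ψ (Φ (Multiplicative.ofAdd v)) = Multiplicative.ofAdd (fun j => (N : ℤ) * v j) := by
    intro v
    rw [hΦapply, Finset.map_noncommProd Finset.univ (fun i => y i ^ v i) (fun _ _ _ _ h => hcomm h _ _) ψ, Finset.noncommProd_eq_prod]
    have : ∀ i, ψ (y i ^ v i) = Multiplicative.ofAdd (Pi.single i ((N : ℤ) * v i)) := by
      intro i
      rw [map_zpow, hyψ, ← ofAdd_zsmul]
      congr 1
      funext j
      by_cases h : j = i <;> simp [h, Pi.single_apply, mul_comm]
    simp only [this]
    rw [← ofAdd_sum]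
    congr 1
    funext j
    simp [Finset.sum_apply, Pi.single_apply]
  have hψΦ' : ∀ u : Multiplicative (Fin r → ℤ),
      ψ (Φ u) = Multiplicative.ofAdd (fun j => (N : ℤ) * Multiplicative.toAdd u j) :=
    fun u => hψΦ (Multiplicative.toAdd u)
  have hψΦinj : ∀ u v : Multiplicative (Fin r → ℤ), ψ (Φ u) = ψ (Φ v) → u = v := by
    intro u v h1
    rw [hψΦ' u, hψΦ' v] at h1
    have h2 : (fun j => (N : ℤ) * Multiplicative.toAdd u j)
        = fun j => (N : ℤ) * Multiplicative.toAdd v j := Multiplicative.ofAdd.injective h1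
    have h3 : Multiplicative.toAdd u = Multiplicative.toAdd v := by
      funext j
      exact mul_left_cancel₀ hN0 (congrFun h2 j)
    exact Multiplicative.toAdd.injective h3
  have hΦinj : Function.Injective ⇑Φ := fun u v h => hψΦinj u v (congrArg ψ h)
  set G₁ : Subgroup G := Φ.range with hG₁
  -- image of `G₁` in the quotient
  have hmapR : G₁.map π = (π.comp Φ).range := (MonoidHom.range_comp π Φ).symm
  -- the range of `ψ ∘ Φ` is the kernel of reduction mod `N`
  haveI : NeZero N := ⟨Nat.mul_ne_zero hm0 hn0⟩
  set q : (Fin r → ℤ) →+ (Fin r → ZMod N) :=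
    { toFun := fun v j => ((v j : ℤ) : ZMod N)
      map_zero' := by funext j; simp
      map_add' := by
        intro a b
        funext j
        show ((a j + b j : ℤ) : ZMod N) = (a j : ZMod N) + (b j : ZMod N)
        push_cast
        ring } with hqdef
  set ρ : Multiplicative (Fin r → ℤ) →* Multiplicative (Fin r → ZMod N) :=
    AddMonoidHom.toMultiplicative q with hρ
  have hρ1 : ∀ w : Multiplicative (Fin r → ℤ),
      ρ w = 1 ↔ ∀ j, ((Multiplicative.toAdd w j : ℤ) : ZMod N) = 0 := by
    intro w
    constructor
    · intro hw j
      have : q (Multiplicative.toAdd w) = 0 := Multiplicative.ofAdd.injective hw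
      exact congrFun this j
    · intro hw
      have : q (Multiplicative.toAdd w) = 0 := funext hw
      show Multiplicative.ofAdd (q (Multiplicative.toAdd w)) = 1
      rw [this]; rfl
  have hSker : (ψ.comp Φ).range = ρ.ker := by
    ext w
    simp only [MonoidHom.mem_range, MonoidHom.mem_ker]
    constructor
    · rintro ⟨v, rfl⟩
      rw [hρ1]
      intro j
      have : ψ.comp Φ v = ψ (Φ v) := rfl
      rw [this, hψΦ' v]
      have : (Multiplicative.toAdd (Multiplicative.ofAdd
          (fun j => (N : ℤ) * Multiplicative.toAdd v j))) j
          = (N : ℤ) * Multiplicative.toAdd v j := rfl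
      rw [this]
      push_cast
      simp [ZMod.natCast_self]
    · intro hw
      rw [hρ1] at hw
      have hdvd : ∀ j, (N : ℤ) ∣ Multiplicative.toAdd w j := by
        intro j
        exact (ZMod.intCast_zmod_eq_zero_iff_dvd _ _).mp (hw j)
      choose c hc using hdvd
      refine ⟨Multiplicative.ofAdd c, ?_⟩
      show ψ (Φ (Multiplicative.ofAdd c)) = w
      rw [hψΦ c]
      have : (fun j => (N : ℤ) * c j) = Multiplicative.toAdd w := by
        funext j; exact (hc j).symm
      rw [this]
      rfl
  haveI hSfin : (ψ.comp Φ).range.FiniteIndex := by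
    rw [hSker]
    exact Subgroup.finiteIndex_ker ρ
  have hRe : (π.comp Φ).range = ((ψ.comp Φ).range).comap e.toMonoidHom := by
    ext g
    simp only [MonoidHom.mem_range, Subgroup.mem_comap]
    constructor
    · rintro ⟨v, rfl⟩
      exact ⟨v, rfl⟩
    · rintro ⟨v, hv⟩
      exact ⟨v, e.injective hv⟩
  have hmapFI : (G₁.map π).FiniteIndex := by
    constructor
    rw [hmapR, hRe, Subgroup.index_comap_of_surjective _ e.surjective]
    exact hSfin.index_ne_zero
  -- finite index of G₁ itself
  set K : Subgroup G := (G₁.map π).comap π with hK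
  haveI hKfi : K.FiniteIndex := by
    constructor
    rw [hK, Subgroup.index_comap_of_surjective _ (QuotientGroup.mk'_surjective H)]
    exact hmapFI.index_ne_zero
  have hle : G₁ ≤ K := Subgroup.le_comap_map _ _
  have hHK : ∀ h ∈ H, h ∈ K := by
    intro h hh
    rw [hK, Subgroup.mem_comap]
    have h1 : π h = 1 := (QuotientGroup.eq_one_iff h).mpr hh
    rw [h1]
    exact Subgroup.one_mem _
  have hfinquot : Finite (K ⧸ G₁.subgroupOf K) := by
    have hsurj : Function.Surjective
        (fun h : ↥H => (QuotientGroup.mk ⟨h.1, hHK h.1 h.2⟩ : K ⧸ G₁.subgroupOf K)) := by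
      intro qq
      induction qq using QuotientGroup.induction_on with
      | _ k =>
        have hk : π k.1 ∈ G₁.map π := Subgroup.mem_comap.mp k.2
        obtain ⟨g₁, hg₁G, hg₁⟩ := hk
        have hkg : k.1 * g₁⁻¹ ∈ H := by
          rw [← QuotientGroup.eq_one_iff]
          show π (k.1 * g₁⁻¹) = 1
          rw [map_mul, map_inv, hg₁, mul_inv_eq_one]
        refine ⟨⟨k.1 * g₁⁻¹, hkg⟩, ?_⟩
        show QuotientGroup.mk (⟨k.1 * g₁⁻¹, hHK _ hkg⟩ : K) = QuotientGroup.mk k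
        rw [QuotientGroup.eq]
        show (⟨k.1 * g₁⁻¹, hHK _ hkg⟩ : K)⁻¹ * k ∈ G₁.subgroupOf K
        rw [Subgroup.mem_subgroupOf]
        show ((⟨k.1 * g₁⁻¹, hHK _ hkg⟩ : K)⁻¹ * k : G) ∈ G₁
        have : ((⟨k.1 * g₁⁻¹, hHK _ hkg⟩ : K)⁻¹ * k : G) = g₁ := by
          push_cast
          group
        rw [this]
        exact hg₁G
    exact Finite.of_surjective _ hsurj
  haveI hsubFI : (G₁.subgroupOf K).FiniteIndex := by haveI := hfinquot; exact Subgroup.finiteIndex_of_finite_quotient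
  have hG₁FI : G₁.FiniteIndex := by
    constructor
    have hrel := Subgroup.relIndex_mul_index hle
    rw [← hrel]
    exact Nat.mul_ne_zero hsubFI.index_ne_zero hKfi.index_ne_zero
  -- injectivity on G₁
  have hinjOn : Set.InjOn (QuotientGroup.mk : G → G ⧸ H) (G₁ : Set G) := by
    intro a ha b hb hab
    obtain ⟨u, rfl⟩ := ha
    obtain ⟨v, rfl⟩ := hb
    have h1 : ψ (Φ u) = ψ (Φ v) := by
      rw [hψeq, hψeq]
      exact congrArg e hab
    rw [hψΦinj u v h1]
  exact ⟨G₁, hG₁FI, ⟨(MonoidHom.ofInjective hΦinj).symm⟩, hinjOn, hmapFI⟩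
end
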